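/- Key lemma in the proof of Theorem 4.2(i): suppose K₀' is continuous and strictly increasing on (-α, β) with K₀'(s) → −∞ as s ↓ −α and K₀'(s) → ∞ as s ↑ β. Fix y ∈ ℝ and let t_y ∈ (-α, β) satisfy K₀'(t_y) = y. For each θ ∈ (-α, ∞), let s_{1,θ} be the unique point of (-α, min(β, θ)) satisfying K₀'(s_{1,θ}) + 1/(θ − s_{1,θ}) = y. Then s_{1,θ} → t_y as θ → ∞. -/

import Mathlib

open MeasureTheory Set Filter

/-- The filter on ℝ describing approach to the (possibly infinite) left endpoint
`-α` of the convergence strip from the right: `s ↓ -α`. -/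
noncomputable def towardsLowerEndpoint (α : EReal) : Filter ℝ :=
  Filter.comap (fun s : ℝ => (s : EReal)) (nhdsWithin (-α) (Set.Ioi (-α)))

/-- The filter on ℝ describing approach to the (possibly infinite) right endpoint
`β` of the convergence strip from the left: `s ↑ β`. -/
noncomputable def towardsUpperEndpoint (β : EReal) : Filter ℝ :=
  Filter.comap (fun s : ℝ => (s : EReal)) (nhdsWithin β (Set.Iio β))

/-- **Key lemma in the proof of Theorem 4.2(i)**: if `K₀'` is continuous and strictly
increasing on `(-α, β)` with `K₀'(s) → −∞` as `s ↓ −α` and `K₀'(s) → ∞` as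
`s ↑ β`, `t_y ∈ (-α, β)` satisfies `K₀'(t_y) = y`, and for each `θ ∈ (-α, ∞)`
`s_{1,θ}` is the unique point of `(-α, min(β, θ))` with
`K₀'(s_{1,θ}) + 1/(θ − s_{1,θ}) = y`, then `s_{1,θ} → t_y` as `θ → ∞`. -/
theorem saddlepoint_tendsto_t_y
    (K₀ : ℝ → ℝ) (α β : EReal) (hα : 0 < α) (hβ : 0 < β)
    (hmono : StrictMonoOn (deriv K₀) {s : ℝ | -α < (s : EReal) ∧ (s : EReal) < β})
    (hcont : ContinuousOn (deriv K₀) {s : ℝ | -α < (s : EReal) ∧ (s : EReal) < β})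
    (hbot : Tendsto (deriv K₀) (towardsLowerEndpoint α) atBot)
    (htop : Tendsto (deriv K₀) (towardsUpperEndpoint β) atTop)
    (y t_y : ℝ) (hty₁ : -α < (t_y : EReal)) (hty₂ : (t_y : EReal) < β)
    (hty : deriv K₀ t_y = y)
    (s₁ : ℝ → ℝ)
    (hs₁ : ∀ θ : ℝ, -α < (θ : EReal) →
      (-α < (s₁ θ : EReal) ∧ (s₁ θ : EReal) < β ∧ s₁ θ < θ) ∧
        deriv K₀ (s₁ θ) + (θ - s₁ θ)⁻¹ = y) :
    Tendsto s₁ atTop (nhds t_y) := by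
  obtain ⟨r, hr₁, hr₂⟩ := EReal.lt_iff_exists_real_btwn.mp hty₁
  have hr₂' : r < t_y := by exact_mod_cast hr₂
  have hty_mem : t_y ∈ {s : ℝ | -α < (s : EReal) ∧ (s : EReal) < β} := ⟨hty₁, hty₂⟩
  have key_lt : ∀ θ : ℝ, -α < (θ : EReal) → s₁ θ < t_y := by
    intro θ hθ
    obtain ⟨⟨h1, h2, h3⟩, heq⟩ := hs₁ θ hθ
    have hpos : 0 < (θ - s₁ θ)⁻¹ := inv_pos.mpr (by linarith)
    have hlt : deriv K₀ (s₁ θ) < deriv K₀ t_y := by rw [hty]; linarith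
    exact (hmono.lt_iff_lt ⟨h1, h2⟩ hty_mem).mp hlt
  rw [tendsto_order]
  constructor
  · intro a ha
    set b := max a r with hb
    have hbty : b < t_y := max_lt ha hr₂'
    have hb_mem : b ∈ {s : ℝ | -α < (s : EReal) ∧ (s : EReal) < β} := by
      refine ⟨lt_of_lt_of_le hr₁ ?_, lt_trans ?_ hty₂⟩
      · exact_mod_cast le_max_right a r
      · exact_mod_cast hbty
    set c := deriv K₀ b with hc
    have hcy : c < y := by rw [← hty]; exact hmono hb_mem hty_mem hbty
    have hyc : 0 < y - c := by linarith
    filter_upwards [eventually_ge_atTop t_y, eventually_gt_atTop (b + (y - c)⁻¹)]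
      with θ hθ1 hθ2
    have hθα : -α < (θ : EReal) := lt_of_lt_of_le hty₁ (by exact_mod_cast hθ1)
    obtain ⟨⟨h1, h2, h3⟩, heq⟩ := hs₁ θ hθα
    by_contra h
    push_neg at h
    have hsb : s₁ θ ≤ b := le_trans h (le_max_left a r)
    have hle : deriv K₀ (s₁ θ) ≤ c := hmono.monotoneOn ⟨h1, h2⟩ hb_mem hsb
    have hinv : y - c ≤ (θ - s₁ θ)⁻¹ := by linarith
    have hgt : (y - c)⁻¹ < θ - s₁ θ := by
      have : (y - c)⁻¹ < θ - b := by linarith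
      linarith
    have : (θ - s₁ θ)⁻¹ < y - c := by
      have h0 : 0 < (y - c)⁻¹ := inv_pos.mpr hyc
      have := inv_strictAnti₀ h0 hgt
      rwa [inv_inv] at this
    linarith
  · intro a ha
    filter_upwards [eventually_ge_atTop t_y] with θ hθ1
    have hθα : -α < (θ : EReal) := lt_of_lt_of_le hty₁ (by exact_mod_cast hθ1)
    exact lt_trans (key_lt θ hθα) ha
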